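/- The space X = {x_n : n ∈ ℕ} ⊂ ℓ^∞(ℕ), where x_n = (log 2, …, log(n+1), 0, …), has bounded geometry: for every r > 0 there is N such that every closed ball of radius r in X contains at most N points. Moreover the finite sets F_n = {x_1, …, x_n} form a Følner sequence: for each r > 0, the r-neighborhood of F_n equals F_n once log(n+1) > r. -/
import Mathlib


noncomputable section
noncomputable section

/-- `x_n = (log 2, log 3, …, log (n+1), 0, 0, …)`: entry `log (k+1)` in positions
`k = 1, …, n` and `0` elsewhere. -/
def xseq (n : ℕ) : ℕ → ℝ := fun k => if 1 ≤ k ∧ k ≤ n then Real.log (k + 1) else 0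

/-- `x'_n = (log 2, log 2, log 3, log 3, …, log (n+1), log (n+1), 0, …)`: each entry
`log k`, `2 ≤ k ≤ n+1`, repeated twice, occupying positions `1, …, 2n`. -/
def xseq' (n : ℕ) : ℕ → ℝ :=
  fun k => if 1 ≤ k ∧ k ≤ 2 * n then Real.log (((k + 1) / 2 + 1 : ℕ) : ℝ) else 0

/-- The sup-metric of `ℓ^∞(ℕ)`. -/
def dsup (x y : ℕ → ℝ) : ℝ := ⨆ k : ℕ, |x k - y k|

lemma dsup_self (x : ℕ → ℝ) : dsup x x = 0 := by simp [dsup]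

lemma dsup_comm (x y : ℕ → ℝ) : dsup x y = dsup y x := by
  simp [dsup, abs_sub_comm]

lemma dsup_lower {n m : ℕ} (h : n < m) :
    Real.log (m + 1) ≤ dsup (xseq n) (xseq m) := by
  have hb : BddAbove (Set.range fun k => |xseq n k - xseq m k|) := by
    refine ⟨Real.log (m + 1), ?_⟩
    rintro _ ⟨k, rfl⟩
    simp only [xseq]
    split_ifs with h1 h2 h2
    · simpa using Real.log_nonneg (by linarith)
    · exact absurd ⟨h1.1, h1.2.trans h.le⟩ h2
    · rw [zero_sub, abs_neg, abs_of_nonneg (Real.log_nonneg (by linarith))]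
      exact Real.log_le_log (by positivity) (by exact_mod_cast by omega)
    · simpa using Real.log_nonneg (by linarith)
  have hkey : |xseq n m - xseq m m| = Real.log (m + 1) := by
    have h1 : ¬(1 ≤ m ∧ m ≤ n) := by omega
    have h2 : (1 ≤ m ∧ m ≤ m) := ⟨by omega, le_rfl⟩
    simp only [xseq, if_neg h1, if_pos h2, zero_sub, abs_neg]
    exact abs_of_nonneg (Real.log_nonneg (by linarith))
  calc Real.log (m + 1) = |xseq n m - xseq m m| := hkey.symm
    _ ≤ dsup (xseq n) (xseq m) := le_ciSup hb m

lemma log_le_of_ne {r : ℝ} {n m : ℕ} (hne : m ≠ n)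
    (hd : dsup (xseq n) (xseq m) ≤ r) : Real.log (m + 1) ≤ r := by
  rcases lt_or_gt_of_ne hne with hlt | hgt
  · have := dsup_lower hlt
    rw [dsup_comm] at hd
    refine le_trans ?_ (this.trans hd)
    exact Real.log_le_log (by positivity) (by exact_mod_cast by omega)
  · exact (dsup_lower hgt).trans hd

/-- the space `X = {x_n : n ≥ 1}` has bounded geometry (balls of radius
`r` contain at most `N = N(r)` points), and the sets `F_n = {x_1, …, x_n}` form a
Følner sequence: the `r`-neighborhood of `F_n` equals `F_n` once `log (n+1) > r`.
(Points are identified with their indices `m ≥ 1`, since `m ↦ x_m` is injective.) -/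
theorem stmt7 :
    (∀ r : ℝ, 0 < r → ∃ N : ℕ, ∀ n : ℕ, 1 ≤ n →
      {m : ℕ | 1 ≤ m ∧ dsup (xseq n) (xseq m) ≤ r}.Finite ∧
      {m : ℕ | 1 ≤ m ∧ dsup (xseq n) (xseq m) ≤ r}.ncard ≤ N) ∧
    (∀ r : ℝ, 0 < r → ∀ n : ℕ, r < Real.log (n + 1) →
      {m : ℕ | 1 ≤ m ∧ ∃ i : ℕ, 1 ≤ i ∧ i ≤ n ∧ dsup (xseq m) (xseq i) ≤ r}
        = Set.Icc 1 n) := by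
  constructor
  · intro r hr
    refine ⟨⌊Real.exp r⌋₊ + 1, fun n hn => ?_⟩
    have hsub : {m : ℕ | 1 ≤ m ∧ dsup (xseq n) (xseq m) ≤ r}
        ⊆ insert n (Set.Icc 1 ⌊Real.exp r⌋₊) := by
      rintro m ⟨hm1, hd⟩
      by_cases hmn : m = n
      · subst hmn; exact Set.mem_insert _ _
      · have hlog := log_le_of_ne hmn hd
        have hexp : (m : ℝ) + 1 ≤ Real.exp r := by
          calc (m : ℝ) + 1 = Real.exp (Real.log (m + 1)) :=
            (Real.exp_log (by positivity)).symm
          _ ≤ Real.exp r := Real.exp_le_exp.2 hlog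
        have hmf : m ≤ ⌊Real.exp r⌋₊ := Nat.le_floor (by linarith)
        exact Set.mem_insert_of_mem _ ⟨hm1, hmf⟩
    have hfin : (insert n (Set.Icc 1 ⌊Real.exp r⌋₊)).Finite :=
      (Set.finite_Icc _ _).insert n
    refine ⟨hfin.subset hsub, ?_⟩
    calc {m : ℕ | 1 ≤ m ∧ dsup (xseq n) (xseq m) ≤ r}.ncard
        ≤ (insert n (Set.Icc 1 ⌊Real.exp r⌋₊)).ncard :=
          Set.ncard_le_ncard hsub hfin
      _ ≤ (Set.Icc 1 ⌊Real.exp r⌋₊).ncard + 1 := Set.ncard_insert_le _ _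
      _ ≤ ⌊Real.exp r⌋₊ + 1 := by
          have : (Set.Icc 1 ⌊Real.exp r⌋₊).ncard = ⌊Real.exp r⌋₊ + 1 - 1 := by
            rw [Set.ncard_eq_toFinset_card', Set.toFinset_Icc, Nat.card_Icc]
          omega
  · intro r hr n hrn
    ext m
    simp only [Set.mem_setOf_eq, Set.mem_Icc]
    constructor
    · rintro ⟨hm1, i, hi1, hin, hd⟩
      refine ⟨hm1, ?_⟩
      by_contra hmn
      push_neg at hmn
      have hlt : i < m := by omega
      have := dsup_lower hlt
      rw [dsup_comm] at hd
      have hle : Real.log (n + 1) ≤ Real.log (m + 1) :=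
        Real.log_le_log (by positivity) (by exact_mod_cast by omega)
      linarith
    · rintro ⟨hm1, hmn⟩
      exact ⟨hm1, m, hm1, hmn, by rw [dsup_self]; exact hr.le⟩

end
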